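/- Let m ≥ 1, let U be an m × m complex unitary matrix, let P be an m × m complex matrix with P² = P and Pᴴ = P (an orthogonal projection), let v₀ and ψ be unit vectors in ℂ^m, and let a ≥ 0 be a real number with P·(U·v₀) = a·ψ. Define W := U·(2·v₀v₀ᴴ − I)·Uᴴ·(2P − I). Then for every natural number k: (i) P·(W^k·(U·v₀)) = T_{2k+1}(a)·ψ, and (ii) ⟨U·v₀, (2P − I)·(W^k·(U·v₀))⟩ = T_{2k+2}(a), where T_n denotes the degree-n Chebyshev polynomial of the first kind evaluated at the real number a. -/
import Mathlib


open Matrix Polynomial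

/-- Coefficient recursion for the amplitude amplification proof. -/
def aaCoef (a : ℝ) : ℕ → ℝ × ℝ
  | 0 => (1, 0)
  | k + 1 =>
      let p := aaCoef a k
      ((4 * a ^ 2 - 1) * p.1 + 2 * a ^ 2 * p.2, -2 * p.1 - p.2)

/-- **Amplitude amplification (Chebyshev form).**
If `P (U v₀) = a ψ` with `U` unitary, `P` an orthogonal projection, and
`W := U (2 v₀v₀ᴴ - I) Uᴴ (2P - I)`, then `P Wᵏ U v₀ = T_{2k+1}(a) ψ` and
`⟨U v₀, (2P - I) Wᵏ U v₀⟩ = T_{2k+2}(a)`. -/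
theorem amplitude_amplification_chebyshev
    (m : ℕ) (hm : 1 ≤ m)
    (U P : Matrix (Fin m) (Fin m) ℂ)
    (hU : U * Uᴴ = 1) (hU' : Uᴴ * U = 1)
    (hP : P * P = P) (hP' : Pᴴ = P)
    (v₀ ψ : Fin m → ℂ)
    (hv₀ : star v₀ ⬝ᵥ v₀ = 1) (hψ : star ψ ⬝ᵥ ψ = 1)
    (a : ℝ) (ha : 0 ≤ a)
    (hstate : P.mulVec (U.mulVec v₀) = (a : ℂ) • ψ)
    (W : Matrix (Fin m) (Fin m) ℂ)
    (hW : W = U * ((2 : ℂ) • Matrix.vecMulVec v₀ (star v₀) - 1) * Uᴴ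
            * ((2 : ℂ) • P - 1))
    (k : ℕ) :
    P.mulVec ((W ^ k).mulVec (U.mulVec v₀))
        = (((Polynomial.Chebyshev.T ℝ (2 * (k : ℤ) + 1)).eval a : ℝ) : ℂ) • ψ ∧
    star (U.mulVec v₀) ⬝ᵥ
        (((2 : ℂ) • P - 1).mulVec ((W ^ k).mulVec (U.mulVec v₀)))
        = (((Polynomial.Chebyshev.T ℝ (2 * (k : ℤ) + 2)).eval a : ℝ) : ℂ) := by
  set u : Fin m → ℂ := U.mulVec v₀ with hu
  have hUv : U.mulVec v₀ = u := hu.symm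
  have hstaru : star u = star v₀ ᵥ* Uᴴ := by rw [hu, Matrix.star_mulVec]
  clear_value u
  -- ⟨u,u⟩ = 1
  have huu : star u ⬝ᵥ u = 1 := by
    rw [hstaru, hu, Matrix.dotProduct_mulVec, Matrix.vecMul_vecMul, hU',
      Matrix.vecMul_one, hv₀]
  -- ⟨u, P u⟩ = a²
  have huPu : star u ⬝ᵥ P.mulVec u = (a : ℂ) ^ 2 := by
    have h2 : star (P.mulVec u) ⬝ᵥ (P.mulVec u) = star u ⬝ᵥ P.mulVec u := by
      rw [Matrix.star_mulVec, hP', ← Matrix.dotProduct_mulVec,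
        Matrix.mulVec_mulVec, hP]
    rw [← h2, hstate]
    simp only [star_smul, smul_dotProduct, dotProduct_smul, hψ,
      smul_eq_mul, mul_one, Complex.star_def, Complex.conj_ofReal]
    ring
  -- P (P u) = P u
  have hPPu : P.mulVec (P.mulVec u) = P.mulVec u := by
    rw [Matrix.mulVec_mulVec, hP]
  -- rank-one action
  have hvv : ∀ w : Fin m → ℂ, (Matrix.vecMulVec v₀ (star v₀)).mulVec w
      = (star v₀ ⬝ᵥ w) • v₀ := by
    intro w
    ext i
    simp [Matrix.mulVec, Matrix.vecMulVec_apply, dotProduct,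
      Finset.mul_sum, mul_assoc, mul_comm, mul_left_comm]
  -- action of W
  have hWact : ∀ z : Fin m → ℂ,
      W.mulVec z = (2 * (star u ⬝ᵥ ((2 : ℂ) • P.mulVec z - z))) • u
        - ((2 : ℂ) • P.mulVec z - z) := by
    intro z
    set y : Fin m → ℂ := (2 : ℂ) • P.mulVec z - z with hy
    have h1 : ((2 : ℂ) • P - 1).mulVec z = y := by
      rw [Matrix.sub_mulVec, Matrix.smul_mulVec, Matrix.one_mulVec, hy]
    have h2 : star v₀ ⬝ᵥ Uᴴ.mulVec y = star u ⬝ᵥ y := by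
      rw [hstaru, Matrix.dotProduct_mulVec]
    have hUy : U.mulVec (Uᴴ.mulVec y) = y := by
      rw [Matrix.mulVec_mulVec, hU, Matrix.one_mulVec]
    rw [hW]
    rw [show U * ((2 : ℂ) • Matrix.vecMulVec v₀ (star v₀) - 1) * Uᴴ
        * ((2 : ℂ) • P - 1)
      = U * (((2 : ℂ) • Matrix.vecMulVec v₀ (star v₀) - 1)
        * (Uᴴ * ((2 : ℂ) • P - 1))) by simp only [mul_assoc]]
    rw [← Matrix.mulVec_mulVec, ← Matrix.mulVec_mulVec, ← Matrix.mulVec_mulVec,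
      h1]
    rw [Matrix.sub_mulVec, Matrix.smul_mulVec, Matrix.one_mulVec, hvv, h2]
    rw [Matrix.mulVec_sub, Matrix.mulVec_smul, Matrix.mulVec_smul, hUy, hUv]
    module
  -- Chebyshev eval abbreviation
  set T : ℤ → ℝ := fun n => (Polynomial.Chebyshev.T ℝ n).eval a with hT
  have hTdef : ∀ n : ℤ, (Polynomial.Chebyshev.T ℝ n).eval a = T n := fun n => rfl
  have hTrec : ∀ n : ℤ, T (n + 2) = 2 * a * T (n + 1) - T n := by
    intro n
    simp only [hT, Polynomial.Chebyshev.T_add_two, Polynomial.eval_sub,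
      Polynomial.eval_mul, Polynomial.eval_ofNat, Polynomial.eval_X]
  have hT1 : T 1 = a := by simp [hT, Polynomial.Chebyshev.T_one]
  have hT2 : T 2 = 2 * a ^ 2 - 1 := by
    simp [hT, Polynomial.Chebyshev.T_two]
  -- main induction
  set α : ℕ → ℝ := fun n => (aaCoef a n).1 with hα
  set β : ℕ → ℝ := fun n => (aaCoef a n).2 with hβ
  have key : ∀ n : ℕ,
      (W ^ n).mulVec u = ((α n : ℝ) : ℂ) • u + ((β n : ℝ) : ℂ) • P.mulVec u
      ∧ (α n + β n) * a = T (2 * (n : ℤ) + 1)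
      ∧ (2 * a ^ 2 - 1) * α n + a ^ 2 * β n = T (2 * (n : ℤ) + 2) := by
    intro n
    induction n with
    | zero =>
        refine ⟨?_, ?_, ?_⟩
        · simp [hα, hβ, aaCoef]
        · simp [hα, hβ, aaCoef, hT1]
        · simp [hα, hβ, aaCoef, hT2]
    | succ n ih =>
        obtain ⟨ihv, ih1, ih2⟩ := ih
        have hα' : α (n + 1) = (4 * a ^ 2 - 1) * α n + 2 * a ^ 2 * β n := rfl
        have hβ' : β (n + 1) = -2 * α n - β n := rfl
        have hvec : (W ^ (n + 1)).mulVec u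
            = ((α (n+1) : ℝ) : ℂ) • u + ((β (n+1) : ℝ) : ℂ) • P.mulVec u := by
          rw [pow_succ', ← Matrix.mulVec_mulVec, ihv, hWact]
          rw [Matrix.mulVec_add, Matrix.mulVec_smul, Matrix.mulVec_smul, hPPu]
          rw [hα', hβ']
          simp only [smul_add, dotProduct_sub, dotProduct_smul, dotProduct_add,
            huu, huPu, smul_eq_mul]
          push_cast
          match_scalars <;> ring
        have hidx1 : 2 * ((n : ℤ) + 1) + 1 = (2 * (n : ℤ) + 1) + 2 := by ring
        have hidx2 : 2 * ((n : ℤ) + 1) + 2 = (2 * (n : ℤ) + 2) + 2 := by ring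
        refine ⟨hvec, ?_, ?_⟩
        · push_cast
          rw [hidx1, hTrec, show (2 * (n : ℤ) + 1) + 1 = 2 * (n : ℤ) + 2 by ring]
          rw [hα', hβ']
          linear_combination 2 * a * ih2 - ih1
        · push_cast
          rw [hidx2, hTrec, show (2 * (n : ℤ) + 2) + 1 = 2 * ((n : ℤ) + 1) + 1 by ring,
            hidx1, hTrec, show (2 * (n : ℤ) + 1) + 1 = 2 * (n : ℤ) + 2 by ring]
          rw [hα', hβ']
          linear_combination (4 * a ^ 2 - 1) * ih2 - 2 * a * ih1
  obtain ⟨hvec, h1, h2⟩ := key k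
  constructor
  · rw [hvec, Matrix.mulVec_add, Matrix.mulVec_smul, Matrix.mulVec_smul, hPPu,
      hstate]
    rw [hTdef, ← h1]
    push_cast
    match_scalars
    ring
  · rw [hvec]
    rw [Matrix.sub_mulVec, Matrix.smul_mulVec, Matrix.one_mulVec]
    rw [Matrix.mulVec_add, Matrix.mulVec_smul, Matrix.mulVec_smul, hPPu]
    simp only [dotProduct_sub, dotProduct_smul, dotProduct_add, huu, huPu,
      smul_eq_mul]
    rw [hTdef, ← h2]
    push_cast
    ring
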